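/- Let T = (1,...,d,t,0) be a single-block Hilbert function, s = d+1-t, δ = max{t+1-s, 0}, and let k be an integer with s+δ < k ≤ s+t. Then the number of partitions P of diagonal lengths T with κ(P) ≥ k equals binom(s+t, k). -/

import Mathlib

/-- The invariant `κ(P)` for a partition `P` (given via its hook code) lying in a `t × s` box,
with parts `f 0 ≥ f 1 ≥ ⋯ ≥ f (t-1)`:
`κ(P) = s + max{t+1-s, 0, τ_1, …, τ_n}`, where for a hook code
`(h_1^{l_1},…,h_n^{l_n})` one has `τ_k = (l_k + ⋯ + l_n) - h_k`; in terms of the parts,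
`τ` at the part `f j` is `#{i | f i ≤ f j} - f j`. -/
def boxKappa (s t : ℕ) (f : Fin t → ℕ) : ℤ :=
  s + Finset.fold max (max ((t : ℤ) + 1 - s) 0)
    (fun j => ((Finset.univ.filter fun i => f i ≤ f j).card : ℤ) - f j) Finset.univ


open Finset

/-- Auxiliary predicate: antitone, bounded by `s`, and the staircase-touch condition. -/
def BoxCond (s t m : ℕ) (f : Fin t → ℕ) : Prop :=
  Antitone f ∧ (∀ i, f i ≤ s) ∧ ∃ j : Fin t, (f j : ℤ) + j ≤ (t : ℤ) - m

lemma finite_aux {s t : ℕ} (Q : (Fin t → ℕ) → Prop) (hQ : ∀ f, Q f → ∀ i, f i ≤ s) :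
    Finite {f : Fin t → ℕ // Q f} := by
  apply Finite.of_injective
    (fun x => (fun i => (⟨x.1 i, Nat.lt_succ_of_le (hQ x.1 x.2 i)⟩ : Fin (s+1))))
  intro a b h
  exact Subtype.ext (funext fun i => congrArg Fin.val (congrFun h i))

lemma card_split {α : Type*} (Q p : α → Prop) [Finite {x // Q x}] :
    Nat.card {x // Q x} =
      Nat.card {x // Q x ∧ p x} + Nat.card {x // Q x ∧ ¬ p x} := by
  classical
  have e := (Equiv.sumCompl (fun x : {x // Q x} => p x.1)).symm
  rw [Nat.card_congr e, Nat.card_sum]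
  congr 1
  · exact Nat.card_congr ((Equiv.subtypeSubtypeEquivSubtypeInter Q p))
  · exact Nat.card_congr ((Equiv.subtypeSubtypeEquivSubtypeInter Q (fun x => ¬ p x)))

lemma antitone_snoc {t : ℕ} {g : Fin t → ℕ} (hg : Antitone g) :
    Antitone (Fin.snoc g 0 : Fin (t+1) → ℕ) := by
  intro i j hij
  induction j using Fin.lastCases with
  | last => simp [Fin.snoc_last]
  | cast j =>
    induction i using Fin.lastCases with
    | last => exact absurd hij (not_le.mpr (Fin.castSucc_lt_last j))
    | cast i =>
      rw [Fin.snoc_castSucc, Fin.snoc_castSucc]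
      exact hg (Fin.castSucc_le_castSucc_iff.mp hij)

lemma antitone_comp_castSucc {t : ℕ} {f : Fin (t+1) → ℕ} (hf : Antitone f) :
    Antitone (f ∘ Fin.castSucc) :=
  hf.comp_monotone (fun _ _ h => Fin.castSucc_le_castSucc_iff.mpr h)

/-- Strip a trailing zero. -/
def snocZeroEquiv (t : ℕ) (Q : (Fin (t+1) → ℕ) → Prop) (R : (Fin t → ℕ) → Prop)
    (h : ∀ g : Fin t → ℕ, Q (Fin.snoc g 0) ↔ R g) :
    {f : Fin (t+1) → ℕ // Q f ∧ f (Fin.last t) = 0} ≃ {g : Fin t → ℕ // R g} where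
  toFun x := ⟨x.1 ∘ Fin.castSucc, by
    have hs : (Fin.snoc (x.1 ∘ Fin.castSucc) 0 : Fin (t+1) → ℕ) = x.1 := by
      funext i
      induction i using Fin.lastCases with
      | last => rw [Fin.snoc_last, x.2.2]
      | cast i => rw [Fin.snoc_castSucc]; rfl
    exact (h _).mp (by rw [hs]; exact x.2.1)⟩
  invFun g := ⟨Fin.snoc g.1 0, (h g.1).mpr g.2, Fin.snoc_last _ _⟩
  left_inv x := by
    apply Subtype.ext
    funext i
    show (Fin.snoc (x.1 ∘ Fin.castSucc) 0 : Fin (t+1) → ℕ) i = x.1 i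
    induction i using Fin.lastCases with
    | last => rw [Fin.snoc_last, x.2.2]
    | cast i => rw [Fin.snoc_castSucc]; rfl
  right_inv g := by
    apply Subtype.ext
    funext i
    show (Fin.snoc g.1 0 : Fin (t+1) → ℕ) (Fin.castSucc i) = g.1 i
    exact Fin.snoc_castSucc _ _ i

/-- Subtract one from every part. -/
def subOneEquiv (t : ℕ) (Q R : (Fin t → ℕ) → Prop)
    (h : ∀ g : Fin t → ℕ, Q (fun i => g i + 1) ↔ R g) :
    {f : Fin t → ℕ // Q f ∧ ∀ i, 1 ≤ f i} ≃ {g : Fin t → ℕ // R g} where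
  toFun x := ⟨fun i => x.1 i - 1, (h _).mp (by
    have hx : (fun i => (x.1 i - 1) + 1) = x.1 :=
      funext fun i => Nat.succ_pred_eq_of_pos (x.2.2 i)
    rw [hx]; exact x.2.1)⟩
  invFun g := ⟨fun i => g.1 i + 1, (h g.1).mpr g.2, fun i => Nat.le_add_left 1 _⟩
  left_inv x := Subtype.ext (funext fun i => Nat.succ_pred_eq_of_pos (x.2.2 i))
  right_inv g := Subtype.ext (funext fun i => Nat.succ_sub_one _)

lemma pos_iff_last {t : ℕ} {f : Fin (t+1) → ℕ} (hf : Antitone f) :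
    ¬ f (Fin.last t) = 0 ↔ ∀ i, 1 ≤ f i := by
  constructor
  · intro h i
    have : f (Fin.last t) ≤ f i := hf (Fin.le_last i)
    omega
  · intro h h0
    have := h (Fin.last t)
    omega

lemma count_box : ∀ t s : ℕ,
    Nat.card {f : Fin t → ℕ // Antitone f ∧ ∀ i, f i ≤ s} = (s + t).choose t := by
  intro t
  induction t with
  | zero =>
    intro s
    haveI : Unique {f : Fin 0 → ℕ // Antitone f ∧ ∀ i, f i ≤ s} :=
      ⟨⟨⟨fun i => i.elim0, fun i => i.elim0, fun i => i.elim0⟩⟩,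
        fun x => Subtype.ext (funext fun i => i.elim0)⟩
    rw [Nat.card_unique]
    simp
  | succ t ih =>
    intro s
    induction s with
    | zero =>
      haveI : Unique {f : Fin (t+1) → ℕ // Antitone f ∧ ∀ i, f i ≤ 0} :=
        ⟨⟨⟨fun _ => 0, antitone_const, fun _ => le_refl 0⟩⟩,
          fun x => Subtype.ext (funext fun i => Nat.le_zero.mp (x.2.2 i))⟩
      rw [Nat.card_unique]
      simp
    | succ s ihs =>
      haveI : Finite {f : Fin (t+1) → ℕ // Antitone f ∧ ∀ i, f i ≤ s + 1} :=
        finite_aux _ (fun f hf => hf.2)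
      rw [card_split _ (fun f => f (Fin.last t) = 0)]
      have e0 : {f : Fin (t+1) → ℕ // (Antitone f ∧ ∀ i, f i ≤ s + 1) ∧ f (Fin.last t) = 0} ≃
          {g : Fin t → ℕ // Antitone g ∧ ∀ i, g i ≤ s + 1} := by
        apply snocZeroEquiv
        intro g
        constructor
        · rintro ⟨h1, h2⟩
          exact ⟨fun i j hij => by simpa using h1 (Fin.castSucc_le_castSucc_iff.mpr hij),
            fun i => by simpa using h2 (Fin.castSucc i)⟩
        · rintro ⟨h1, h2⟩
          refine ⟨antitone_snoc h1, fun i => ?_⟩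
          induction i using Fin.lastCases with
          | last => simp
          | cast i => simpa using h2 i
      have e1 : {f : Fin (t+1) → ℕ // (Antitone f ∧ ∀ i, f i ≤ s + 1) ∧
          ¬ f (Fin.last t) = 0} ≃ {g : Fin (t+1) → ℕ // Antitone g ∧ ∀ i, g i ≤ s} := by
        have eq1 : {f : Fin (t+1) → ℕ // (Antitone f ∧ ∀ i, f i ≤ s + 1) ∧
            ¬ f (Fin.last t) = 0} ≃
            {f : Fin (t+1) → ℕ // (Antitone f ∧ ∀ i, f i ≤ s + 1) ∧ ∀ i, 1 ≤ f i} :=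
          Equiv.subtypeEquivRight (fun f => and_congr_right fun hq => pos_iff_last hq.1)
        refine eq1.trans (subOneEquiv (t+1)
          (fun f => Antitone f ∧ ∀ i, f i ≤ s + 1) _ ?_)
        intro g
        constructor
        · rintro ⟨h1, h2⟩
          constructor
          · intro i j hij
            have h3 : g j + 1 ≤ g i + 1 := h1 hij
            exact Nat.le_of_succ_le_succ h3
          · intro i
            have h3 : g i + 1 ≤ s + 1 := h2 i
            exact Nat.le_of_succ_le_succ h3
        · rintro ⟨h1, h2⟩
          constructor
          · intro i j hij
            exact Nat.add_le_add_right (h1 hij) 1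
          · intro i
            exact Nat.add_le_add_right (h2 i) 1
      rw [Nat.card_congr e0, Nat.card_congr e1, ih (s+1), ihs]
      have h1 : s + 1 + t = s + t + 1 := by ring
      have h2 : s + (t+1) = s + t + 1 := by ring
      have h3 : s + 1 + (t+1) = (s + t + 1) + 1 := by ring
      rw [h1, h2, h3]
      exact (Nat.choose_succ_succ (s + t + 1) t).symm


lemma boxCond_empty_t0 (s m : ℕ) : IsEmpty {f : Fin 0 → ℕ // BoxCond s 0 m f} := by
  refine ⟨fun x => ?_⟩
  obtain ⟨f, _, _, j, _⟩ := x
  exact j.elim0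

lemma boxCond_empty_s0 (t m : ℕ) (h : t < m) : IsEmpty {f : Fin t → ℕ // BoxCond 0 t m f} := by
  refine ⟨fun x => ?_⟩
  obtain ⟨f, _, _, j, hj⟩ := x
  have h1 : (0:ℤ) ≤ (f j : ℤ) := Int.natCast_nonneg _
  have h2 : (0:ℤ) ≤ ((j : ℕ) : ℤ) := Int.natCast_nonneg _
  omega

lemma antitone_snoc_iff {t s : ℕ} (g : Fin t → ℕ) :
    (Antitone (Fin.snoc g 0 : Fin (t+1) → ℕ) ∧ ∀ i, (Fin.snoc g 0 : Fin (t+1) → ℕ) i ≤ s)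
      ↔ (Antitone g ∧ ∀ i, g i ≤ s) := by
  constructor
  · rintro ⟨h1, h2⟩
    constructor
    · intro i j hij
      have := h1 (Fin.castSucc_le_castSucc_iff.mpr hij)
      rwa [Fin.snoc_castSucc, Fin.snoc_castSucc] at this
    · intro i
      have := h2 (Fin.castSucc i)
      rwa [Fin.snoc_castSucc] at this
  · rintro ⟨h1, h2⟩
    refine ⟨antitone_snoc h1, fun i => ?_⟩
    induction i using Fin.lastCases with
    | last => simp
    | cast i => rw [Fin.snoc_castSucc]; exact h2 i

lemma boxCond_snoc_one (s t : ℕ) (g : Fin t → ℕ) :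
    BoxCond s (t+1) 1 (Fin.snoc g 0) ↔ (Antitone g ∧ ∀ i, g i ≤ s) := by
  unfold BoxCond
  constructor
  · rintro ⟨h1, h2, _⟩
    exact antitone_snoc_iff g |>.mp ⟨h1, h2⟩
  · rintro ⟨h1, h2⟩
    obtain ⟨h1', h2'⟩ := (antitone_snoc_iff (s := s) g).mpr ⟨h1, h2⟩
    refine ⟨h1', h2', ⟨Fin.last t, ?_⟩⟩
    rw [Fin.snoc_last, Fin.val_last]
    push_cast
    omega

lemma boxCond_snoc (s t m : ℕ) (g : Fin t → ℕ) :
    BoxCond s (t+1) (m+2) (Fin.snoc g 0) ↔ BoxCond s t (m+1) g := by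
  unfold BoxCond
  constructor
  · rintro ⟨h1, h2, j, hj⟩
    obtain ⟨h1', h2'⟩ := antitone_snoc_iff g |>.mp ⟨h1, h2⟩
    refine ⟨h1', h2', ?_⟩
    induction j using Fin.lastCases with
    | last =>
      rw [Fin.snoc_last, Fin.val_last] at hj
      exfalso
      push_cast at hj
      omega
    | cast j =>
      rw [Fin.snoc_castSucc, Fin.coe_castSucc] at hj
      refine ⟨j, ?_⟩
      push_cast at hj ⊢
      omega
  · rintro ⟨h1, h2, j, hj⟩
    obtain ⟨h1', h2'⟩ := (antitone_snoc_iff (s := s) g).mpr ⟨h1, h2⟩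
    refine ⟨h1', h2', ⟨Fin.castSucc j, ?_⟩⟩
    rw [Fin.snoc_castSucc, Fin.coe_castSucc]
    push_cast at hj ⊢
    omega

lemma boxCond_addOne (s t m : ℕ) (g : Fin t → ℕ) :
    BoxCond (s+1) t m (fun i => g i + 1) ↔ BoxCond s t (m+1) g := by
  unfold BoxCond
  constructor
  · rintro ⟨h1, h2, j, hj⟩
    refine ⟨?_, ?_, ⟨j, ?_⟩⟩
    · intro i j' hij
      have h3 : g j' + 1 ≤ g i + 1 := h1 hij
      omega
    · intro i
      have h3 : g i + 1 ≤ s + 1 := h2 i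
      omega
    · have hj' : ((g j + 1 : ℕ) : ℤ) + (j : ℕ) ≤ (t : ℤ) - m := hj
      push_cast at hj' ⊢
      omega
  · rintro ⟨h1, h2, j, hj⟩
    refine ⟨?_, ?_, ⟨j, ?_⟩⟩
    · intro i j' hij
      exact Nat.add_le_add_right (h1 hij) 1
    · intro i
      exact Nat.add_le_add_right (h2 i) 1
    · show ((g j + 1 : ℕ) : ℤ) + (j : ℕ) ≤ (t : ℤ) - m
      push_cast at hj ⊢
      omega

lemma count_box_cond : ∀ t s m : ℕ, 1 ≤ m → t < s + m →
    Nat.card {f : Fin t → ℕ // BoxCond s t m f} = (s + t).choose (s + m) := by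
  intro t
  induction t with
  | zero =>
    intro s m hm h2
    haveI := boxCond_empty_t0 s m
    rw [Nat.card_of_isEmpty]
    exact (Nat.choose_eq_zero_of_lt (by omega)).symm
  | succ t ih =>
    intro s
    induction s with
    | zero =>
      intro m hm h2
      haveI := boxCond_empty_s0 (t+1) m (by omega)
      rw [Nat.card_of_isEmpty]
      exact (Nat.choose_eq_zero_of_lt (by omega)).symm
    | succ s ihs =>
      intro m hm h2
      haveI : Finite {f : Fin (t+1) → ℕ // BoxCond (s+1) (t+1) m f} :=
        finite_aux _ (fun f hf => hf.2.1)
      rw [card_split _ (fun f => f (Fin.last t) = 0)]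
      have e1 : {f : Fin (t+1) → ℕ // BoxCond (s+1) (t+1) m f ∧ ¬ f (Fin.last t) = 0} ≃
          {g : Fin (t+1) → ℕ // BoxCond s (t+1) (m+1) g} := by
        have eq1 : {f : Fin (t+1) → ℕ // BoxCond (s+1) (t+1) m f ∧ ¬ f (Fin.last t) = 0} ≃
            {f : Fin (t+1) → ℕ // BoxCond (s+1) (t+1) m f ∧ ∀ i, 1 ≤ f i} :=
          Equiv.subtypeEquivRight (fun f => and_congr_right fun hq => pos_iff_last hq.1)
        exact eq1.trans (subOneEquiv (t+1) (fun f => BoxCond (s+1) (t+1) m f) _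
          (fun g => boxCond_addOne s (t+1) m g))
      have hms : t + 1 < s + (m + 1) := by omega
      rw [Nat.card_congr e1, ihs (m+1) (by omega) hms]
      match m, hm with
      | 1, _ =>
        have e0 : {f : Fin (t+1) → ℕ // BoxCond (s+1) (t+1) 1 f ∧ f (Fin.last t) = 0} ≃
            {g : Fin t → ℕ // Antitone g ∧ ∀ i, g i ≤ s + 1} :=
          snocZeroEquiv t _ _ (boxCond_snoc_one (s+1) t)
        rw [Nat.card_congr e0, count_box t (s+1)]
        have hsym : (s + 1 + t).choose t = (s + t + 1).choose (s + 1) := by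
          have h4 := Nat.choose_symm (show s + 1 ≤ s + t + 1 by omega)
          rw [show s + t + 1 - (s + 1) = t by omega] at h4
          rw [show s + 1 + t = s + t + 1 by ring]
          exact h4
        rw [hsym, show s + (t+1) = s + t + 1 by ring, show s + (1+1) = (s+1) + 1 by ring,
          show s + 1 + (t+1) = (s + t + 1) + 1 by ring, show s + 1 + 1 = (s+1) + 1 by ring]
        exact (Nat.choose_succ_succ (s + t + 1) (s + 1)).symm
      | (m+2), _ =>
        have e0 : {f : Fin (t+1) → ℕ // BoxCond (s+1) (t+1) (m+2) f ∧ f (Fin.last t) = 0} ≃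
            {g : Fin t → ℕ // BoxCond (s+1) t (m+1) g} :=
          snocZeroEquiv t _ _ (boxCond_snoc (s+1) t m)
        have harg1 : 1 ≤ m + 1 := Nat.le_add_left 1 m
        have harg2 : t < (s+1) + (m+1) := by omega
        rw [Nat.card_congr e0, ih (s+1) (m+1) harg1 harg2]
        rw [show s + 1 + t = s + t + 1 by ring, show s + 1 + (m+1) = s + m + 2 by ring,
          show s + (t+1) = s + t + 1 by ring, show s + (m+2+1) = (s + m + 2) + 1 by ring,
          show s + 1 + (t+1) = (s + t + 1) + 1 by ring,
          show s + 1 + (m+2) = (s + m + 2) + 1 by ring]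
        exact (Nat.choose_succ_succ (s + t + 1) (s + m + 2)).symm

lemma exists_touch_iff {t : ℕ} (f : Fin t → ℕ) (hf : Antitone f) (m : ℕ) :
    (∃ j : Fin t, (m:ℤ) ≤ ((Finset.univ.filter fun i => f i ≤ f j).card : ℤ) - f j) ↔
    (∃ j : Fin t, (f j : ℤ) + j ≤ (t:ℤ) - m) := by
  constructor
  · rintro ⟨j, hj⟩
    have hjS : j ∈ Finset.univ.filter fun i => f i ≤ f j := by simp
    have hne : (Finset.univ.filter fun i => f i ≤ f j).Nonempty := ⟨j, hjS⟩
    set i0 := (Finset.univ.filter fun i => f i ≤ f j).min' hne with hi0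
    have hi0S : i0 ∈ Finset.univ.filter fun i => f i ≤ f j := Finset.min'_mem _ hne
    have hi0j : i0 ≤ j := Finset.min'_le _ j hjS
    have hle1 : f i0 ≤ f j := by
      have := hi0S
      simp only [Finset.mem_filter, Finset.mem_univ, true_and] at this
      exact this
    have hfi0 : f i0 = f j := le_antisymm hle1 (hf hi0j)
    have hsub : (Finset.univ.filter fun i => f i ≤ f j) ⊆ Finset.Ici i0 :=
      fun x hx => Finset.mem_Ici.mpr (Finset.min'_le _ x hx)
    have hcard : (Finset.univ.filter fun i => f i ≤ f j).card ≤ t - (i0 : ℕ) := by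
      have h5 := Finset.card_le_card hsub
      rwa [Fin.card_Ici] at h5
    refine ⟨i0, ?_⟩
    have h0 : (i0 : ℕ) < t := i0.isLt
    rw [hfi0]
    omega
  · rintro ⟨j, hj⟩
    refine ⟨j, ?_⟩
    have hsub : Finset.Ici j ⊆ Finset.univ.filter fun i => f i ≤ f j := by
      intro x hx
      simp only [Finset.mem_filter, Finset.mem_univ, true_and]
      exact hf (Finset.mem_Ici.mp hx)
    have hcard : t - (j : ℕ) ≤ (Finset.univ.filter fun i => f i ≤ f j).card := by
      have h5 := Finset.card_le_card hsub
      rwa [Fin.card_Ici] at h5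
    have hjt : (j : ℕ) < t := j.isLt
    omega

lemma kappa_iff (s t k m δ : ℕ) (hδ : δ = t + 1 - s) (hk1 : s + δ < k) (hkm : k = s + m)
    (f : Fin t → ℕ) :
    ((k:ℤ) ≤ boxKappa s t f) ↔
      ∃ j : Fin t, (m:ℤ) ≤ ((Finset.univ.filter fun i => f i ≤ f j).card : ℤ) - f j := by
  unfold boxKappa
  rw [← sub_le_iff_le_add', Finset.le_fold_max]
  have hks : ((k:ℤ) - s) = (m:ℤ) := by omega
  constructor
  · rintro (h | ⟨j, _, hj⟩)
    · exfalso
      rcases le_max_iff.mp h with h | h <;> omega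
    · exact ⟨j, by rwa [hks] at hj⟩
  · rintro ⟨j, hj⟩
    exact Or.inr ⟨j, Finset.mem_univ j, by rwa [hks]⟩

/-- For a single-block Hilbert function `T = (1,…,d,t,0)`, `s = d+1-t`, `δ = max{t+1-s,0}`
and `s+δ < k ≤ s+t`, the number of partitions `P` of diagonal lengths `T` (identified with
their hook codes, partitions in a `t × s` box) with `κ(P) ≥ k` is `(s+t).choose k`. -/
theorem card_kappa_ge (d t s δ k : ℕ) (ht : 0 < t) (htd : t ≤ d)
    (hs : s = d + 1 - t) (hδ : δ = t + 1 - s)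
    (hk1 : s + δ < k) (hk2 : k ≤ s + t) :
    Nat.card {f : Fin t → ℕ // Antitone f ∧ (∀ i, f i ≤ s) ∧ (k : ℤ) ≤ boxKappa s t f} =
      Nat.choose (s + t) k := by
  have hkm : k = s + (k - s) := by omega
  have h1 : 1 ≤ k - s := by omega
  have h2 : t < s + (k - s) := by omega
  have key : ∀ f : Fin t → ℕ,
      (Antitone f ∧ (∀ i, f i ≤ s) ∧ (k:ℤ) ≤ boxKappa s t f) ↔ BoxCond s t (k - s) f := by
    intro f
    unfold BoxCond
    refine and_congr_right fun hA => and_congr_right fun _ => ?_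
    rw [kappa_iff s t k (k - s) δ hδ hk1 hkm f]
    exact exists_touch_iff f hA (k - s)
  rw [Nat.card_congr (Equiv.subtypeEquivRight key), count_box_cond t s (k - s) h1 h2, ← hkm]
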